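/- Let U be a connected topological space, and let A₁, A₂ be open connected subsets of U, both nonempty and different from U. Suppose (i) A₁ ∩ A₂ ≠ ∅, (ii) A₁ ∩ (U \ A₂) ≠ ∅, (iii) A₂ ∩ (U \ A₁) ≠ ∅, and (iv) the frontiers of A₁ and A₂ in U are connected and disjoint. Then the frontier of A₁ in U is contained in A₂ and the frontier of A₂ in U is contained in A₁. -/
import Mathlib

open Set

lemma frontier_inter_nonempty_aux {U : Type*} [TopologicalSpace U]
    {A B : Set U} (hB : IsPreconnected B)
    (h1 : (B ∩ A).Nonempty) (h2 : (B ∩ Aᶜ).Nonempty) :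
    (frontier A ∩ B).Nonempty := by
  by_contra h
  rw [Set.not_nonempty_iff_eq_empty] at h
  have hcov : B ⊆ A ∪ (closure A)ᶜ := by
    intro x hx
    by_cases hxA : x ∈ A
    · exact Or.inl hxA
    · refine Or.inr ?_
      intro hxc
      have : x ∈ frontier A ∩ B := ⟨⟨hxc, fun hi => hxA (interior_subset hi)⟩, hx⟩
      rw [h] at this; exact this
  obtain ⟨x, hx⟩ := hB (interior A) (closure A)ᶜ isOpen_interior (isOpen_compl_iff.2 isClosed_closure)
    (by
      intro x hx
      rcases hcov hx with h' | h'
      · by_cases hxi : x ∈ interior A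
        · exact Or.inl hxi
        · exfalso
          have : x ∈ frontier A ∩ B := ⟨⟨subset_closure h', hxi⟩, hx⟩
          rw [h] at this; exact this
      · exact Or.inr h')
    (by
      obtain ⟨y, hyB, hyA⟩ := h1
      refine ⟨y, hyB, ?_⟩
      by_contra hyi
      have : y ∈ frontier A ∩ B := ⟨⟨subset_closure hyA, hyi⟩, hyB⟩
      rw [h] at this; exact this)
    (by
      obtain ⟨y, hyB, hyA⟩ := h2
      refine ⟨y, hyB, ?_⟩
      intro hyc
      by_cases hyi : y ∈ interior A
      · exact hyA (interior_subset hyi)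
      · have : y ∈ frontier A ∩ B := ⟨⟨hyc, hyi⟩, hyB⟩
        rw [h] at this; exact this)
  exact (hx.2.2 (subset_closure (interior_subset hx.2.1)))

lemma frontier_subset_aux {U : Type*} [TopologicalSpace U]
    {A B : Set U} (hBo : IsOpen B) (hBc : IsPreconnected B)
    (hfA : IsPreconnected (frontier A))
    (h1 : (B ∩ A).Nonempty) (h2 : (B ∩ Aᶜ).Nonempty)
    (hdisj : Disjoint (frontier A) (frontier B)) :
    frontier A ⊆ B := by
  have hmeet : (frontier A ∩ B).Nonempty := frontier_inter_nonempty_aux hBc h1 h2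
  have hcov : frontier A ⊆ B ∪ (closure B)ᶜ := by
    intro x hx
    by_cases hxB : x ∈ B
    · exact Or.inl hxB
    · refine Or.inr fun hxc => ?_
      exact hdisj.ne_of_mem hx ⟨hxc, fun hi => hxB (hBo.interior_eq ▸ hi)⟩ rfl
  rcases hfA.subset_or_subset hBo (isOpen_compl_iff.2 isClosed_closure)
      (disjoint_compl_right.mono_right (compl_subset_compl.2 subset_closure)) hcov with h | h
  · exact h
  · exfalso
    obtain ⟨x, hx1, hx2⟩ := hmeet
    exact h hx1 (subset_closure hx2)

/-- Lemma 1 (i): frontier containment for two overlapping open connected proper subsets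
of a connected space with connected disjoint frontiers. -/
theorem frontier_subset_of_chain_lemma
    (U : Type*) [TopologicalSpace U] [ConnectedSpace U]
    (A₁ A₂ : Set U)
    (h₁o : IsOpen A₁) (h₂o : IsOpen A₂)
    (h₁c : IsConnected A₁) (h₂c : IsConnected A₂)
    (h₁ne : A₁ ≠ Set.univ) (h₂ne : A₂ ≠ Set.univ)
    (h12 : (A₁ ∩ A₂).Nonempty)
    (h1not2 : (A₁ ∩ A₂ᶜ).Nonempty)
    (h2not1 : (A₂ ∩ A₁ᶜ).Nonempty)
    (hf₁ : IsConnected (frontier A₁)) (hf₂ : IsConnected (frontier A₂))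
    (hdisj : Disjoint (frontier A₁) (frontier A₂)) :
    frontier A₁ ⊆ A₂ ∧ frontier A₂ ⊆ A₁ :=
  ⟨frontier_subset_aux h₂o h₂c.isPreconnected hf₁.isPreconnected
      (Set.inter_comm A₁ A₂ ▸ h12) h2not1 hdisj,
   frontier_subset_aux h₁o h₁c.isPreconnected hf₂.isPreconnected
      h12 h1not2 hdisj.symm⟩
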